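/- arXiv:1902.05178 — 3 statements merged into one kernel-verified Lean document; each statement's English description precedes it below -/
import Mathlib

section
/- (Variant 1 vulnerability in the model) Consider the unmitigated bounds-check code: 0: load r1 [#array − 1] (loads the array length L); 1: binop[ge] r2 r0 r1; 2: branch r2 @oob; 3: load r0 [r0 + #array]; 4: load r0 [r0 + #timing]; with @oob returning 0. There exist an initial index value v ≥ L in r0 and a branch-predictor state B predicting not-taken at instruction 2, such that the speculative semantics, starting from an empty reorder buffer, reaches a state in which the S-Load-Execute rule resolves the load at instruction 3 with address #array + v and subsequently resolves the load at instruction 4 with address #timing + M[#array + v]; whereas no architectural execution of this program with index v ≥ L ever performs a load from address #array + v or from any address of the form #timing + x. -/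
/-- Binary operations of the architecture. -/
inductive Op where
  | eq | ge | add | sub | mul | div | shl | shr | and | or | xor
  deriving DecidableEq

/-- Instructions of the architecture. -/
inductive Instr where
  | const  (rd : Fin 16) (k : ℤ)
  | load   (rd : Fin 16) (ra : Fin 16) (k : ℤ)
  | store  (ra : Fin 16) (k : ℤ) (rv : Fin 16)
  | binop  (op : Op) (rd : Fin 16) (ra : Fin 16) (rb : Fin 16)
  | branch (rc : Fin 16) (d : ℤ)
  | jump   (rd : Fin 16)
  deriving DecidableEq

/-- A program maps integer program counters to instructions. -/
abbrev Prog := ℤ → Instr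

/-- Architectural states: program counter, register file, memory. -/
structure ArchState where
  pc : ℤ
  R : Fin 16 → ℤ
  M : ℤ → ℤ

/-- Semantics of the binary operations. -/
def opDenote : Op → ℤ → ℤ → ℤ
  | .eq, a, b => if a = b then 1 else 0
  | .ge, a, b => if b ≤ a then 1 else 0
  | .add, a, b => a + b
  | .sub, a, b => a - b
  | .mul, a, b => a * b
  | .div, a, b => a / b
  | .shl, a, b => a * 2 ^ b.toNat
  | .shr, a, b => a / 2 ^ b.toNat
  | .and, a, b => Int.land a b
  | .or, a, b => Int.lor a b
  | .xor, a, b => Int.xor a b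

/-- The architectural small-step semantics `ρ, σ → σ'`. -/
inductive Step (ρ : Prog) : ArchState → ArchState → Prop
  | const {σ : ArchState} {rd : Fin 16} {k : ℤ} :
      ρ σ.pc = .const rd k →
      Step ρ σ ⟨σ.pc + 1, Function.update σ.R rd k, σ.M⟩
  | load {σ : ArchState} {rd ra : Fin 16} {k : ℤ} :
      ρ σ.pc = .load rd ra k →
      Step ρ σ ⟨σ.pc + 1, Function.update σ.R rd (σ.M (σ.R ra + k)), σ.M⟩
  | store {σ : ArchState} {ra : Fin 16} {k : ℤ} {rv : Fin 16} :
      ρ σ.pc = .store ra k rv →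
      Step ρ σ ⟨σ.pc + 1, σ.R, Function.update σ.M (σ.R ra + k) (σ.R rv)⟩
  | binop {σ : ArchState} {op : Op} {rd ra rb : Fin 16} :
      ρ σ.pc = .binop op rd ra rb →
      Step ρ σ ⟨σ.pc + 1, Function.update σ.R rd (opDenote op (σ.R ra) (σ.R rb)), σ.M⟩
  | branchTaken {σ : ArchState} {rc : Fin 16} {d : ℤ} :
      ρ σ.pc = .branch rc d → σ.R rc ≠ 0 →
      Step ρ σ ⟨σ.pc + d, σ.R, σ.M⟩
  | branchNotTaken {σ : ArchState} {rc : Fin 16} {d : ℤ} :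
      ρ σ.pc = .branch rc d → σ.R rc = 0 →
      Step ρ σ ⟨σ.pc + 1, σ.R, σ.M⟩
  | jump {σ : ArchState} {rd : Fin 16} :
      ρ σ.pc = .jump rd →
      Step ρ σ ⟨σ.R rd, σ.R, σ.M⟩

/-- The architectural semantics as a (deterministic, total) function. -/
def archStep (ρ : Prog) (σ : ArchState) : ArchState :=
  match ρ σ.pc with
  | .const rd k => ⟨σ.pc + 1, Function.update σ.R rd k, σ.M⟩
  | .load rd ra k => ⟨σ.pc + 1, Function.update σ.R rd (σ.M (σ.R ra + k)), σ.M⟩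
  | .store ra k rv => ⟨σ.pc + 1, σ.R, Function.update σ.M (σ.R ra + k) (σ.R rv)⟩
  | .binop op rd ra rb => ⟨σ.pc + 1, Function.update σ.R rd (opDenote op (σ.R ra) (σ.R rb)), σ.M⟩
  | .branch rc d => if σ.R rc ≠ 0 then ⟨σ.pc + d, σ.R, σ.M⟩ else ⟨σ.pc + 1, σ.R, σ.M⟩
  | .jump rd => ⟨σ.R rd, σ.R, σ.M⟩

/-- `applyE ρ σ m` : the unique architectural state reached after `m` transitions from `σ`
(the paper's `apply(ρ, σ, {e_i})`). -/
def applyE (ρ : Prog) (σ : ArchState) (m : ℕ) : ArchState := (archStep ρ)^[m] σ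

/-- A reorder buffer entry `⟨pc, v_⊥, b⟩`: instruction address, optional computed value,
and recorded branch prediction (`none` for non-branches). -/
structure Entry where
  pc : ℤ
  val : Option ℤ
  pred : Option Bool

/-- The non-speculating instructions (const, load, store, binop). -/
def nospecB : Instr → Bool
  | .const _ _ => true
  | .load _ _ _ => true
  | .store _ _ _ => true
  | .binop _ _ _ _ => true
  | _ => false

/-- Resolve a register value through a reorder buffer given newest-entry-first;
`none` means unresolved (⊥). -/
def lookupRAux (ρ : Prog) (R : Fin 16 → ℤ) : List Entry → Fin 16 → Option ℤ
  | [], r => some (R r)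
  | e :: E, r =>
    match ρ e.pc with
    | .load rd _ _ => if rd = r then e.val else lookupRAux ρ R E r
    | .binop _ rd _ _ => if rd = r then e.val else lookupRAux ρ R E r
    | _ => lookupRAux ρ R E r

/-- `lookupR(ρ, R, E, r)`: resolve register `r` through the reorder buffer `E`
(oldest entry first, as in the paper). -/
def lookupR (ρ : Prog) (R : Fin 16 → ℤ) (E : List Entry) (r : Fin 16) : Option ℤ :=
  lookupRAux ρ R E.reverse r

/-- Resolve a memory value through a reorder buffer given newest-entry-first. -/
def lookupMAux (ρ : Prog) (R : Fin 16 → ℤ) (M : ℤ → ℤ) : List Entry → ℤ → Option ℤ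
  | [], a => some (M a)
  | e :: E, a =>
    match ρ e.pc with
    | .store ra k rv =>
      match lookupRAux ρ R E ra with
      | none => none
      | some va => if va + k = a then lookupRAux ρ R E rv else lookupMAux ρ R M E a
    | _ => lookupMAux ρ R M E a

/-- `lookupM(ρ, R, M, E, a)`: resolve memory location `a` through the reorder buffer `E`
(oldest entry first, as in the paper). -/
def lookupM (ρ : Prog) (R : Fin 16 → ℤ) (M : ℤ → ℤ) (E : List Entry) (a : ℤ) : Option ℤ :=
  lookupMAux ρ R M E.reverse a

/-- Microarchitectural (speculative) states `⟨σ, spc, E, B⟩`,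
parametric in the branch-predictor state type `BP`. -/
structure SpecState (BP : Type) where
  σ : ArchState
  spc : ℤ
  rob : List Entry
  bp : BP

/-- Issue rules: S-Seq-Issue and S-Branch-Issue. -/
inductive IssueStep {BP : Type} (ρ : Prog) (predict : BP → ℤ → Bool) :
    SpecState BP → SpecState BP → Prop
  | seq {μ : SpecState BP} :
      nospecB (ρ μ.spc) = true →
      IssueStep ρ predict μ ⟨μ.σ, μ.spc + 1, μ.rob ++ [⟨μ.spc, none, none⟩], μ.bp⟩
  | branch {μ : SpecState BP} {rc : Fin 16} {d : ℤ} :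
      ρ μ.spc = .branch rc d →
      IssueStep ρ predict μ
        ⟨μ.σ, (if predict μ.bp μ.spc then μ.spc + d else μ.spc + 1),
          μ.rob ++ [⟨μ.spc, none, some (predict μ.bp μ.spc)⟩], μ.bp⟩

/-- Execute rules: S-Load-Execute and S-Op-Execute. -/
inductive ExecStep {BP : Type} (ρ : Prog) : SpecState BP → SpecState BP → Prop
  | load {σ : ArchState} {spc : ℤ} {bp : BP} {E E' : List Entry} {p : ℤ}
      {rd ra : Fin 16} {k va v : ℤ} :
      ρ p = .load rd ra k →
      lookupR ρ σ.R E ra = some va →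
      lookupM ρ σ.R σ.M E (va + k) = some v →
      ExecStep ρ ⟨σ, spc, E ++ ⟨p, none, none⟩ :: E', bp⟩
                 ⟨σ, spc, E ++ ⟨p, some v, none⟩ :: E', bp⟩
  | op {σ : ArchState} {spc : ℤ} {bp : BP} {E E' : List Entry} {p : ℤ}
      {op : Op} {rd ra rb : Fin 16} {va vb : ℤ} :
      ρ p = .binop op rd ra rb →
      lookupR ρ σ.R E ra = some va →
      lookupR ρ σ.R E rb = some vb →
      ExecStep ρ ⟨σ, spc, E ++ ⟨p, none, none⟩ :: E', bp⟩
                 ⟨σ, spc, E ++ ⟨p, some (opDenote op va vb), none⟩ :: E', bp⟩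

/-- Commit rules: S-NS-Commit, S-Predict-Success and S-Predict-Fail. -/
inductive CommitStep {BP : Type} (ρ : Prog) (bpUpd : BP → Bool → BP) :
    SpecState BP → SpecState BP → Prop
  | ns {σ σ' : ArchState} {spc : ℤ} {bp : BP} {v : Option ℤ} {b : Option Bool}
      {E : List Entry} :
      nospecB (ρ σ.pc) = true →
      Step ρ σ σ' →
      CommitStep ρ bpUpd ⟨σ, spc, ⟨σ.pc, v, b⟩ :: E, bp⟩ ⟨σ', spc, E, bp⟩
  | predictSuccess {pc : ℤ} {R : Fin 16 → ℤ} {M : ℤ → ℤ} {spc : ℤ} {bp : BP} {b : Bool}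
      {E : List Entry} {rc : Fin 16} {d : ℤ} :
      ρ pc = .branch rc d →
      b = decide (R rc ≠ 0) →
      CommitStep ρ bpUpd ⟨⟨pc, R, M⟩, spc, ⟨pc, none, some b⟩ :: E, bp⟩
        ⟨⟨if R rc ≠ 0 then pc + d else pc + 1, R, M⟩, spc, E, bpUpd bp b⟩
  | predictFail {pc : ℤ} {R : Fin 16 → ℤ} {M : ℤ → ℤ} {spc : ℤ} {bp : BP} {b : Bool}
      {E : List Entry} {rc : Fin 16} {d : ℤ} :
      ρ pc = .branch rc d →
      b = !decide (R rc ≠ 0) →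
      CommitStep ρ bpUpd ⟨⟨pc, R, M⟩, spc, ⟨pc, none, some b⟩ :: E, bp⟩
        ⟨⟨if R rc ≠ 0 then pc + d else pc + 1, R, M⟩, spc, [], bpUpd bp (!b)⟩

/-- A step of the speculative semantics is an issue, execute or commit step. -/
def SStep {BP : Type} (ρ : Prog) (predict : BP → ℤ → Bool) (bpUpd : BP → Bool → BP)
    (μ μ' : SpecState BP) : Prop :=
  IssueStep ρ predict μ μ' ∨ ExecStep ρ μ μ' ∨ CommitStep ρ bpUpd μ μ'

/-- Agreement of `apply(ρ, σ, {e_i})` with the microarchitectural state at depth `m`: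
registers and memory resolved through the first `m` reorder-buffer entries are ⊥ or match
the architectural state after `m` transitions, and the program counters line up. -/
def agreesAt {BP : Type} (ρ : Prog) (μ : SpecState BP) (m : ℕ) : Prop :=
  (∀ r : Fin 16, lookupR ρ μ.σ.R (μ.rob.take m) r = none ∨
      lookupR ρ μ.σ.R (μ.rob.take m) r = some ((applyE ρ μ.σ m).R r)) ∧
  (∀ l : ℤ, lookupM ρ μ.σ.R μ.σ.M (μ.rob.take m) l = none ∨
      lookupM ρ μ.σ.R μ.σ.M (μ.rob.take m) l = some ((applyE ρ μ.σ m).M l)) ∧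
  (match μ.rob[m]? with
   | some e => (applyE ρ μ.σ m).pc = e.pc
   | none => (applyE ρ μ.σ m).pc = μ.spc)

/-- The microarchitectural state mis-speculates at reorder-buffer depth `m`:
the entry at depth `m` is a branch whose recorded prediction disagrees with the
condition evaluated in the architectural state after `m` transitions. -/
def misspecAt {BP : Type} (ρ : Prog) (μ : SpecState BP) (m : ℕ) : Prop :=
  ∃ (e : Entry) (rc : Fin 16) (d : ℤ) (b : Bool),
    μ.rob[m]? = some e ∧ ρ e.pc = .branch rc d ∧ e.pred = some b ∧
    b = !decide ((applyE ρ μ.σ m).R rc ≠ 0)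

/-- Reachability from a state with empty reorder buffer. -/
def ReachableEmpty {BP : Type} (ρ : Prog) (predict : BP → ℤ → Bool) (bpUpd : BP → Bool → BP)
    (μ : SpecState BP) : Prop :=
  ∃ μ₀ : SpecState BP, μ₀.rob = [] ∧ Relation.ReflTransGen (SStep ρ predict bpUpd) μ₀ μ

/-- The unmitigated bounds-check code of Figure 3 (register `r4` holds 0, `r15` the
return address; the array length is stored at `arrayBase - 1`; `@oob` is at pc 6). -/
def vulnProg (arrayBase timingBase : ℤ) : Prog := fun pc =>
  if pc = 0 then .load 1 4 (arrayBase - 1)       -- load r1 [#array - 1]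
  else if pc = 1 then .binop .ge 2 0 1           -- r2 := (index ≥ length)
  else if pc = 2 then .branch 2 4                -- (vulnerable) bounds check, @oob = 6
  else if pc = 3 then .load 0 0 arrayBase        -- load [array + index]
  else if pc = 4 then .load 0 0 timingBase       -- load [timing + val]
  else if pc = 5 then .jump 15                   -- return
  else if pc = 6 then .const 0 0                 -- @oob: out of bounds => 0
  else .jump 15                                  -- return

/-- The S-Load-Execute rule resolves, in state `μ`, a (not yet executed) load entry for
the instruction at `p` with address `l`. -/
def ResolvesLoadAt {BP : Type} (ρ : Prog) (μ : SpecState BP) (p l : ℤ) : Prop :=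
  ∃ (E : List Entry) (e : Entry) (E' : List Entry) (rd ra : Fin 16) (k va v : ℤ),
    μ.rob = E ++ e :: E' ∧ e.pc = p ∧ e.val = none ∧ ρ e.pc = .load rd ra k ∧
    lookupR ρ μ.σ.R E ra = some va ∧ va + k = l ∧
    lookupM ρ μ.σ.R μ.σ.M E l = some v

/-- **Variant 1 vulnerability in the model.** There exist an index `v ≥ L`
and a branch-predictor state predicting not-taken at instruction 2 such that the
speculative semantics, from an empty reorder buffer, reaches a state resolving the load at
instruction 3 with address `#array + v`, and subsequently resolves the load at
instruction 4 with address `#timing + M[#array + v]`; whereas no architectural execution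
with any index `v' ≥ L` ever executes the load at instruction 3 (from `#array + v'`) or
the load at instruction 4 (from any address of the form `#timing + x`). -/
theorem variant1_attack (arrayBase timingBase : ℤ) (R₀ : Fin 16 → ℤ) (M₀ : ℤ → ℤ)
    (hzero : R₀ 4 = 0) (hret : R₀ 15 = 100)
    (L : ℤ) (hL : M₀ (arrayBase - 1) = L) (hLpos : 0 ≤ L) :
    ∃ (v : ℤ) (B : ℤ → Bool), L ≤ v ∧ B 2 = false ∧
      (∃ μ₁ μ₂ : SpecState (ℤ → Bool),
        Relation.ReflTransGen
          (SStep (vulnProg arrayBase timingBase) (fun bp pc => bp pc) (fun bp _ => bp))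
          ⟨⟨0, Function.update R₀ 0 v, M₀⟩, 0, [], B⟩ μ₁ ∧
        ResolvesLoadAt (vulnProg arrayBase timingBase) μ₁ 3 (v + arrayBase) ∧
        Relation.ReflTransGen
          (SStep (vulnProg arrayBase timingBase) (fun bp pc => bp pc) (fun bp _ => bp))
          μ₁ μ₂ ∧
        ResolvesLoadAt (vulnProg arrayBase timingBase) μ₂ 4
          (M₀ (v + arrayBase) + timingBase)) ∧
      (∀ v' : ℤ, L ≤ v' → ∀ n : ℕ,
        (applyE (vulnProg arrayBase timingBase) ⟨0, Function.update R₀ 0 v', M₀⟩ n).pc ≠ 3 ∧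
        (applyE (vulnProg arrayBase timingBase) ⟨0, Function.update R₀ 0 v', M₀⟩ n).pc ≠ 4) := by
  set ρ := vulnProg arrayBase timingBase with hρ
  have hρ0 : ρ 0 = .load 1 4 (arrayBase - 1) := by norm_num [hρ, vulnProg]
  have hρ1 : ρ 1 = .binop .ge 2 0 1 := by norm_num [hρ, vulnProg]
  have hρ2 : ρ 2 = .branch 2 4 := by norm_num [hρ, vulnProg]
  have hρ3 : ρ 3 = .load 0 0 arrayBase := by norm_num [hρ, vulnProg]
  have hρ4 : ρ 4 = .load 0 0 timingBase := by norm_num [hρ, vulnProg]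
  have hρ6 : ρ 6 = .const 0 0 := by norm_num [hρ, vulnProg]
  have hρ7 : ρ 7 = .jump 15 := by norm_num [hρ, vulnProg]
  have hρ100 : ρ 100 = .jump 15 := by norm_num [hρ, vulnProg]
  refine ⟨L, fun _ => false, le_refl _, rfl, ?_, ?_⟩
  · -- speculative trace
    set v := L
    set P : (ℤ → Bool) → ℤ → Bool := fun bp pc => bp pc
    set U : (ℤ → Bool) → Bool → (ℤ → Bool) := fun bp _ => bp
    set B : ℤ → Bool := fun _ => false
    set σ₀ : ArchState := ⟨0, Function.update R₀ 0 v, M₀⟩ with hσ₀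
    set w := M₀ (v + arrayBase) with hw
    set e0 : Entry := ⟨0, none, none⟩
    set e1 : Entry := ⟨1, none, none⟩
    set e2 : Entry := ⟨2, none, some false⟩
    set e3 : Entry := ⟨3, none, none⟩
    set e3' : Entry := ⟨3, some w, none⟩
    set e4 : Entry := ⟨4, none, none⟩
    set μ₁ : SpecState (ℤ → Bool) := ⟨σ₀, 5, [e0, e1, e2, e3, e4], B⟩ with hμ₁
    set μ₂ : SpecState (ℤ → Bool) := ⟨σ₀, 5, [e0, e1, e2, e3', e4], B⟩ with hμ₂
    have hR0 : σ₀.R 0 = v := by simp [hσ₀]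
    have hlkR : lookupR ρ σ₀.R [e0, e1, e2] 0 = some v := by
      simp [lookupR, lookupRAux, hρ0, hρ1, hρ2, e0, e1, e2, hR0]
    have hlkM : ∀ a : ℤ, lookupM ρ σ₀.R σ₀.M [e0, e1, e2] a = some (M₀ a) := by
      intro a
      simp [lookupM, lookupMAux, hρ0, hρ1, hρ2, e0, e1, e2, hσ₀]
    have hlkR2 : lookupR ρ σ₀.R [e0, e1, e2, e3'] 0 = some w := by
      simp [lookupR, lookupRAux, hρ0, hρ1, hρ2, hρ3, e0, e1, e2, e3']
    have hlkM2 : ∀ a : ℤ, lookupM ρ σ₀.R σ₀.M [e0, e1, e2, e3'] a = some (M₀ a) := by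
      intro a
      simp [lookupM, lookupMAux, hρ0, hρ1, hρ2, hρ3, e0, e1, e2, e3', hσ₀]
    refine ⟨μ₁, μ₂, ?_, ?_, ?_, ?_⟩
    · -- reach μ₁ by five issue steps
      have s1 : SStep ρ P U ⟨σ₀, 0, [], B⟩ ⟨σ₀, 1, [e0], B⟩ := by
        left
        have h := IssueStep.seq (ρ := ρ) (predict := P) (μ := ⟨σ₀, 0, [], B⟩)
          (by simp [hρ0, nospecB])
        simpa using h
      have s2 : SStep ρ P U ⟨σ₀, 1, [e0], B⟩ ⟨σ₀, 2, [e0, e1], B⟩ := by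
        left
        have h := IssueStep.seq (ρ := ρ) (predict := P) (μ := ⟨σ₀, 1, [e0], B⟩)
          (by simp [hρ1, nospecB])
        simpa using h
      have s3 : SStep ρ P U ⟨σ₀, 2, [e0, e1], B⟩ ⟨σ₀, 3, [e0, e1, e2], B⟩ := by
        left
        have h := IssueStep.branch (ρ := ρ) (predict := P) (μ := ⟨σ₀, 2, [e0, e1], B⟩) hρ2
        simpa [P, B, e2] using h
      have s4 : SStep ρ P U ⟨σ₀, 3, [e0, e1, e2], B⟩ ⟨σ₀, 4, [e0, e1, e2, e3], B⟩ := by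
        left
        have h := IssueStep.seq (ρ := ρ) (predict := P) (μ := ⟨σ₀, 3, [e0, e1, e2], B⟩)
          (by simp [hρ3, nospecB])
        simpa using h
      have s5 : SStep ρ P U ⟨σ₀, 4, [e0, e1, e2, e3], B⟩ μ₁ := by
        left
        have h := IssueStep.seq (ρ := ρ) (predict := P) (μ := ⟨σ₀, 4, [e0, e1, e2, e3], B⟩)
          (by simp [hρ4, nospecB])
        simpa [hμ₁] using h
      exact .tail (.tail (.tail (.tail (.tail .refl s1) s2) s3) s4) s5
    · -- μ₁ resolves load at 3
      exact ⟨[e0, e1, e2], e3, [e4], 0, 0, arrayBase, v, w,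
        rfl, rfl, rfl, by simpa [e3] using hρ3, hlkR, rfl, hlkM _⟩
    · -- one execute step from μ₁ to μ₂
      refine .single (Or.inr (Or.inl ?_))
      have h := ExecStep.load (ρ := ρ) (σ := σ₀) (spc := 5) (bp := B)
        (E := [e0, e1, e2]) (E' := [e4]) (p := 3) hρ3 hlkR (hlkM _)
      simpa [hμ₁, hμ₂, e3, e3', hw] using h
    · -- μ₂ resolves load at 4
      exact ⟨[e0, e1, e2, e3'], e4, [], 0, 0, timingBase, w, M₀ (w + timingBase),
        rfl, rfl, rfl, by simpa [e4] using hρ4, hlkR2, rfl, hlkM2 _⟩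
  · -- architectural safety
    intro v' hv' n
    set σ : ArchState := ⟨0, Function.update R₀ 0 v', M₀⟩ with hσ
    have h4 : σ.R 4 = 0 := by simp [hσ, Function.update]; exact hzero
    have h15 : σ.R 15 = 100 := by simp [hσ, Function.update]; exact hret
    have h0 : σ.R 0 = v' := by simp [hσ]
    set R1 := Function.update σ.R 1 L with hR1
    have st1 : applyE ρ σ 1 = ⟨1, R1, M₀⟩ := by
      simp [applyE, archStep, hρ0, hσ, hR1]
      congr 1
      rw [show R₀ 4 + (arrayBase - 1) = arrayBase - 1 by rw [hzero]; ring, hL]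
    set R2 := Function.update R1 2 1 with hR2
    have st2 : applyE ρ σ 2 = ⟨2, R2, M₀⟩ := by
      have : applyE ρ σ 2 = archStep ρ (applyE ρ σ 1) := by
        simp [applyE, Function.iterate_succ_apply']
      rw [this, st1]
      simp only [archStep, hρ1]
      have hr0 : R1 0 = v' := by simp [hR1, h0]
      have hr1 : R1 1 = L := by simp [hR1]
      simp [opDenote, hr0, hr1, hv', hR2]
    have st3 : applyE ρ σ 3 = ⟨6, R2, M₀⟩ := by
      have : applyE ρ σ 3 = archStep ρ (applyE ρ σ 2) := by
        simp [applyE, Function.iterate_succ_apply']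
      rw [this, st2]
      have hr2 : R2 2 = 1 := by simp [hR2]
      simp only [archStep, hρ2]
      norm_num [hr2]
    set R4 := Function.update R2 0 0 with hR4
    have st4 : applyE ρ σ 4 = ⟨7, R4, M₀⟩ := by
      have : applyE ρ σ 4 = archStep ρ (applyE ρ σ 3) := by
        simp [applyE, Function.iterate_succ_apply']
      rw [this, st3]
      simp [archStep, hρ6, hR4]
    have hr15 : R4 15 = 100 := by
      simp only [hR4, hR2, hR1, hσ]
      rw [Function.update_of_ne (by decide), Function.update_of_ne (by decide),
        Function.update_of_ne (by decide), Function.update_of_ne (by decide)]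
      exact hret
    have st5 : applyE ρ σ 5 = ⟨100, R4, M₀⟩ := by
      have : applyE ρ σ 5 = archStep ρ (applyE ρ σ 4) := by
        simp [applyE, Function.iterate_succ_apply']
      rw [this, st4]
      simp [archStep, hρ7, hr15]
    have fix : archStep ρ ⟨100, R4, M₀⟩ = ⟨100, R4, M₀⟩ := by
      simp [archStep, hρ100, hr15]
    have hbig : ∀ k : ℕ, applyE ρ σ (k + 5) = ⟨100, R4, M₀⟩ := by
      intro k
      have : applyE ρ σ (k + 5) = (archStep ρ)^[k] (applyE ρ σ 5) := by
        simp [applyE, Function.iterate_add_apply]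
      rw [this, st5, Function.iterate_fixed fix]
    match n with
    | 0 => simp [applyE, hσ]
    | 1 => rw [st1]; norm_num
    | 2 => rw [st2]; norm_num
    | 3 => rw [st3]; norm_num
    | 4 => rw [st4]; norm_num
    | (k + 5) => rw [hbig k]; norm_num
end

section
/- (Correctness of the cache-extended μ-architecture) The cache-extended semantics is a correct implementation of the architectural semantics in the paper's sense: for every program ρ, every n ∈ ℕ and architectural states σ, σ' with ρ, σ →ⁿ σ' in the architectural semantics, and every cache state C (a list of at most C_max addresses), there exist m ∈ ℕ and a cache state C' such that the cache-extended semantics takes ⟨σ, C⟩ to ⟨σ', C'⟩ in m steps; moreover m equals n plus the number of uncached memory accesses encountered along the way, so n ≤ m ≤ 2n. -/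
/-- LRU update: prepend `a`, remove any other occurrence of `a`, truncate to length `n`. -/
def lru (n : ℕ) (C : List ℤ) (a : ℤ) : List ℤ := (a :: C.filter (· ≠ a)).take n

/-- States of the cache-extended μ-architecture. -/
structure CState where
  σ : ArchState
  C : List ℤ

/-- The cache-extended semantics; the `Bool` flag marks the extra penalty step taken by an
uncached memory access (Uncached-Load / Uncached-Store). -/
inductive CStep (ρ : Prog) (n : ℕ) : CState → Bool → CState → Prop
  | uncachedLoad {σ : ArchState} {C : List ℤ} {rd ra : Fin 16} {k : ℤ} :
      ρ σ.pc = .load rd ra k → σ.R ra + k ∉ C →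
      CStep ρ n ⟨σ, C⟩ true ⟨σ, lru n C (σ.R ra + k)⟩
  | uncachedStore {σ : ArchState} {C : List ℤ} {ra : Fin 16} {k : ℤ} {rv : Fin 16} :
      ρ σ.pc = .store ra k rv → σ.R ra + k ∉ C →
      CStep ρ n ⟨σ, C⟩ true ⟨σ, lru n C (σ.R ra + k)⟩
  | cachedLoad {σ : ArchState} {C : List ℤ} {rd ra : Fin 16} {k : ℤ} :
      ρ σ.pc = .load rd ra k → σ.R ra + k ∈ C →
      CStep ρ n ⟨σ, C⟩ false
        ⟨⟨σ.pc + 1, Function.update σ.R rd (σ.M (σ.R ra + k)), σ.M⟩, lru n C (σ.R ra + k)⟩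
  | cachedStore {σ : ArchState} {C : List ℤ} {ra : Fin 16} {k : ℤ} {rv : Fin 16} :
      ρ σ.pc = .store ra k rv → σ.R ra + k ∈ C →
      CStep ρ n ⟨σ, C⟩ false
        ⟨⟨σ.pc + 1, σ.R, Function.update σ.M (σ.R ra + k) (σ.R rv)⟩, lru n C (σ.R ra + k)⟩
  | other {σ σ' : ArchState} {C : List ℤ} :
      (∀ (rd ra : Fin 16) (k : ℤ), ρ σ.pc ≠ .load rd ra k) →
      (∀ (ra : Fin 16) (k : ℤ) (rv : Fin 16), ρ σ.pc ≠ .store ra k rv) →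
      Step ρ σ σ' →
      CStep ρ n ⟨σ, C⟩ false ⟨σ', C⟩

/-- `CTrace ρ n m u s s'`: the cache-extended semantics takes `s` to `s'` in `m` steps,
`u` of which are uncached-access penalty steps. -/
inductive CTrace (ρ : Prog) (n : ℕ) : ℕ → ℕ → CState → CState → Prop
  | refl (s : CState) : CTrace ρ n 0 0 s s
  | tail {m u : ℕ} {s t t' : CState} {b : Bool} :
      CTrace ρ n m u s t → CStep ρ n t b t' →
      CTrace ρ n (m + 1) (u + (if b then 1 else 0)) s t'

/-- `n`-fold iteration of the architectural small-step relation: `ρ, σ →ⁿ σ'`. -/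
inductive StepN (ρ : Prog) : ℕ → ArchState → ArchState → Prop
  | refl (σ : ArchState) : StepN ρ 0 σ σ
  | tail {n : ℕ} {σ σ' σ'' : ArchState} :
      StepN ρ n σ σ' → Step ρ σ' σ'' → StepN ρ (n + 1) σ σ''

lemma mem_lru {n : ℕ} (hn : 0 < n) (C : List ℤ) (a : ℤ) : a ∈ lru n C a := by
  unfold lru
  cases n with
  | zero => omega
  | succ n => simp [List.take_succ_cons]

lemma CTrace.trans {ρ : Prog} {N m u m' u' : ℕ} {s t t' : CState}
    (h1 : CTrace ρ N m u s t) (h2 : CTrace ρ N m' u' t t') :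
    CTrace ρ N (m + m') (u + u') s t' := by
  induction h2 with
  | refl => exact h1
  | tail h2 hs ih =>
      rw [← Nat.add_assoc, ← Nat.add_assoc]
      exact (ih h1).tail hs

lemma step_sim {ρ : Prog} {Cmax : ℕ} (hCmax : 0 < Cmax) {σ σ' : ArchState}
    (h : Step ρ σ σ') (C : List ℤ) :
    ∃ (b : Bool) (C' : List ℤ),
      CTrace ρ Cmax (1 + (if b then 1 else 0)) (if b then 1 else 0) ⟨σ, C⟩ ⟨σ', C'⟩ := by
  cases h with
  | @load rd ra k hι =>
      by_cases hm : σ.R ra + k ∈ C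
      · exact ⟨false, _, (CTrace.refl _).tail (CStep.cachedLoad hι hm)⟩
      · exact ⟨true, _, ((CTrace.refl _).tail (CStep.uncachedLoad hι hm)).tail
          (CStep.cachedLoad hι (mem_lru hCmax C _))⟩
  | @store ra k rv hι =>
      by_cases hm : σ.R ra + k ∈ C
      · exact ⟨false, _, (CTrace.refl _).tail (CStep.cachedStore hι hm)⟩
      · exact ⟨true, _, ((CTrace.refl _).tail (CStep.uncachedStore hι hm)).tail
          (CStep.cachedStore hι (mem_lru hCmax C _))⟩
  | @const rd k hι =>
      exact ⟨false, C, (CTrace.refl _).tail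
        (CStep.other (by simp [hι]) (by simp [hι]) (Step.const hι))⟩
  | @binop op rd ra rb hι =>
      exact ⟨false, C, (CTrace.refl _).tail
        (CStep.other (by simp [hι]) (by simp [hι]) (Step.binop hι))⟩
  | @branchTaken rc d hι hc =>
      exact ⟨false, C, (CTrace.refl _).tail
        (CStep.other (by simp [hι]) (by simp [hι]) (Step.branchTaken hι hc))⟩
  | @branchNotTaken rc d hι hc =>
      exact ⟨false, C, (CTrace.refl _).tail
        (CStep.other (by simp [hι]) (by simp [hι]) (Step.branchNotTaken hι hc))⟩
  | @jump rd hι =>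
      exact ⟨false, C, (CTrace.refl _).tail
        (CStep.other (by simp [hι]) (by simp [hι]) (Step.jump hι))⟩

/-- **Correctness of the cache-extended μ-architecture.** For every
program `ρ`, every `n` and architectural states `σ, σ'` with `ρ, σ →ⁿ σ'`, and every
cache state `C` of at most `Cmax` addresses, there are a cache state `C'` and a number
`u ≤ n` of uncached accesses encountered along the way such that the cache-extended
semantics takes `⟨σ, C⟩` to `⟨σ', C'⟩` in `m = n + u` steps (so `n ≤ m ≤ 2n`). -/
theorem cache_extension_correct (ρ : Prog) (Cmax : ℕ) (hCmax : 0 < Cmax)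
    (n : ℕ) (σ σ' : ArchState) (harch : StepN ρ n σ σ')
    (C : List ℤ) (hlen : C.length ≤ Cmax) :
    ∃ (u : ℕ) (C' : List ℤ), u ≤ n ∧
      CTrace ρ Cmax (n + u) u ⟨σ, C⟩ ⟨σ', C'⟩ := by
  induction harch with
  | refl => exact ⟨0, C, Nat.le_refl _, CTrace.refl _⟩
  | @tail n τ₀ τ τ2 hsn hstep ih =>
      obtain ⟨u, C', hu, htr⟩ := ih
      obtain ⟨b, C'', htr2⟩ := step_sim hCmax hstep C'
      refine ⟨u + (if b then 1 else 0), C'', by cases b <;> simp <;> omega, ?_⟩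
      have := htr.trans htr2
      have e1 : n + 1 + (u + (if b then 1 else 0)) = n + u + (1 + (if b then 1 else 0)) := by omega
      rw [e1]
      exact this
end

section
/- (Existence of a write mechanism via the cache) In the cache-extended semantics (caches as lists of at most C_max ≥ 1 pairwise-distinct addresses with LRU replacement), there exist a program w, two disjoint sets of initial states Σ_w(0) and Σ_w(1) encoding an input bit b, a common final architectural state φ, and a function V from cache states to {0,1}, such that: every initial state in Σ_w(b) architecturally reaches φ (so the bit b is not recoverable from the architectural state φ); and for every initial state in Σ_w(b), when the cache-extended execution from that state (with empty initial cache) first reaches a state whose architectural component is φ, the cache component C satisfies V(C) = b. Concretely, w may branch on the input bit and access a distinguished address a₀ exactly when b = 1, then overwrite the input bit with 0, and V(C) = 1 iff a₀ ∈ C. -/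
namespace CWM

/-- The write-mechanism program. -/
def w : Prog := fun pc =>
  if pc = 0 then .branch 0 2
  else if pc = 1 then .load 1 1 7
  else if pc = 3 then .const 1 0
  else .const 0 0

def init (b : Bool) : ArchState :=
  ⟨0, Function.update (fun _ => 0) 0 (if b then 0 else 1), fun _ => 0⟩

def phi : ArchState := ⟨4, fun _ => 0, fun _ => 0⟩

lemma step_det {ρ : Prog} {σ σ' : ArchState} (h : Step ρ σ σ') : σ' = archStep ρ σ := by
  cases h <;> simp_all [archStep]

/-- Deterministic version of the cache-extended step. -/
def cstep (ρ : Prog) (n : ℕ) (s : CState) : CState :=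
  match ρ s.σ.pc with
  | .load rd _ra k =>
      if s.σ.R _ra + k ∈ s.C then
        ⟨⟨s.σ.pc + 1, Function.update s.σ.R rd (s.σ.M (s.σ.R _ra + k)), s.σ.M⟩,
          lru n s.C (s.σ.R _ra + k)⟩
      else ⟨s.σ, lru n s.C (s.σ.R _ra + k)⟩
  | .store _ra k rv =>
      if s.σ.R _ra + k ∈ s.C then
        ⟨⟨s.σ.pc + 1, s.σ.R, Function.update s.σ.M (s.σ.R _ra + k) (s.σ.R rv)⟩,
          lru n s.C (s.σ.R _ra + k)⟩
      else ⟨s.σ, lru n s.C (s.σ.R _ra + k)⟩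
  | _ => ⟨archStep ρ s.σ, s.C⟩

lemma cstep_det {ρ : Prog} {n : ℕ} {s s' : CState} {b : Bool}
    (h : CStep ρ n s b s') : s' = cstep ρ n s := by
  cases h with
  | uncachedLoad h hm => simp [cstep, h, hm]
  | uncachedStore h hm => simp [cstep, h, hm]
  | cachedLoad h hm => simp [cstep, h, hm]
  | cachedStore h hm => simp [cstep, h, hm]
  | other hl hs hstep =>
    simp only [cstep]
    rw [step_det hstep]

lemma cstep_total (ρ : Prog) (n : ℕ) (s : CState) : ∃ b, CStep ρ n s b (cstep ρ n s) := by
  obtain ⟨σ, C⟩ := s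
  rcases he : ρ σ.pc with ⟨rd, k⟩ | ⟨rd, ra, k⟩ | ⟨ra, k, rv⟩ | ⟨op, rd, ra, rb⟩ | ⟨rc, d⟩ | ⟨rd⟩
  case load =>
    by_cases hm : σ.R ra + k ∈ C
    · refine ⟨false, ?_⟩
      have : cstep ρ n ⟨σ, C⟩ =
          ⟨⟨σ.pc + 1, Function.update σ.R rd (σ.M (σ.R ra + k)), σ.M⟩,
            lru n C (σ.R ra + k)⟩ := by simp [cstep, he, hm]
      rw [this]; exact .cachedLoad he hm
    · refine ⟨true, ?_⟩
      have : cstep ρ n ⟨σ, C⟩ = ⟨σ, lru n C (σ.R ra + k)⟩ := by simp [cstep, he, hm]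
      rw [this]; exact .uncachedLoad he hm
  case store =>
    by_cases hm : σ.R ra + k ∈ C
    · refine ⟨false, ?_⟩
      have : cstep ρ n ⟨σ, C⟩ =
          ⟨⟨σ.pc + 1, σ.R, Function.update σ.M (σ.R ra + k) (σ.R rv)⟩,
            lru n C (σ.R ra + k)⟩ := by simp [cstep, he, hm]
      rw [this]; exact .cachedStore he hm
    · refine ⟨true, ?_⟩
      have : cstep ρ n ⟨σ, C⟩ = ⟨σ, lru n C (σ.R ra + k)⟩ := by simp [cstep, he, hm]
      rw [this]; exact .uncachedStore he hm
  case const =>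
    refine ⟨false, ?_⟩
    have h1 : cstep ρ n ⟨σ, C⟩ = ⟨archStep ρ σ, C⟩ := by simp [cstep, he]
    rw [h1]
    have h2 : archStep ρ σ = ⟨σ.pc + 1, Function.update σ.R rd k, σ.M⟩ := by
      simp [archStep, he]
    rw [h2]
    exact .other (by simp [he]) (by simp [he]) (.const he)
  case binop =>
    refine ⟨false, ?_⟩
    have h1 : cstep ρ n ⟨σ, C⟩ = ⟨archStep ρ σ, C⟩ := by simp [cstep, he]
    rw [h1]
    have h2 : archStep ρ σ =
        ⟨σ.pc + 1, Function.update σ.R rd (opDenote op (σ.R ra) (σ.R rb)), σ.M⟩ := by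
      simp [archStep, he]
    rw [h2]
    exact .other (by simp [he]) (by simp [he]) (.binop he)
  case branch =>
    refine ⟨false, ?_⟩
    have h1 : cstep ρ n ⟨σ, C⟩ = ⟨archStep ρ σ, C⟩ := by simp [cstep, he]
    rw [h1]
    by_cases hc : σ.R rc = 0
    · have h2 : archStep ρ σ = ⟨σ.pc + 1, σ.R, σ.M⟩ := by simp [archStep, he, hc]
      rw [h2]
      exact .other (by simp [he]) (by simp [he]) (.branchNotTaken he hc)
    · have h2 : archStep ρ σ = ⟨σ.pc + d, σ.R, σ.M⟩ := by simp [archStep, he, hc]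
      rw [h2]
      exact .other (by simp [he]) (by simp [he]) (.branchTaken he hc)
  case jump =>
    refine ⟨false, ?_⟩
    have h1 : cstep ρ n ⟨σ, C⟩ = ⟨archStep ρ σ, C⟩ := by simp [cstep, he]
    rw [h1]
    have h2 : archStep ρ σ = ⟨σ.R rd, σ.R, σ.M⟩ := by simp [archStep, he]
    rw [h2]
    exact .other (by simp [he]) (by simp [he]) (.jump he)

lemma trace_cstep {ρ : Prog} {n m u : ℕ} {s0 s : CState}
    (h : CTrace ρ n m u s0 s) : s = (cstep ρ n)^[m] s0 := by
  induction h with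
  | refl => rfl
  | tail h hstep ih =>
    rw [Function.iterate_succ_apply', ← ih, cstep_det hstep]

lemma trace_exists (ρ : Prog) (n : ℕ) (m : ℕ) (s0 : CState) :
    ∃ u, CTrace ρ n m u s0 ((cstep ρ n)^[m] s0) := by
  induction m with
  | zero => exact ⟨0, .refl s0⟩
  | succ m ih =>
    obtain ⟨u, t⟩ := ih
    obtain ⟨b, hstep⟩ := cstep_total ρ n ((cstep ρ n)^[m] s0)
    rw [Function.iterate_succ_apply']
    exact ⟨_, .tail t hstep⟩

end CWM

namespace CWM

lemma archStep_const {ρ : Prog} {p : ℤ} {R M} {rd k} (h : ρ p = .const rd k) :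
    archStep ρ ⟨p, R, M⟩ = ⟨p + 1, Function.update R rd k, M⟩ := by
  simp [archStep, h]

lemma archStep_branchT {ρ : Prog} {p : ℤ} {R M} {rc d} (h : ρ p = .branch rc d)
    (hc : R rc ≠ 0) : archStep ρ ⟨p, R, M⟩ = ⟨p + d, R, M⟩ := by
  simp [archStep, h, hc]

lemma archStep_branchN {ρ : Prog} {p : ℤ} {R M} {rc d} (h : ρ p = .branch rc d)
    (hc : R rc = 0) : archStep ρ ⟨p, R, M⟩ = ⟨p + 1, R, M⟩ := by
  simp [archStep, h, hc]

lemma archStep_load {ρ : Prog} {p : ℤ} {R M} {rd ra k} (h : ρ p = .load rd ra k) :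
    archStep ρ ⟨p, R, M⟩ = ⟨p + 1, Function.update R rd (M (R ra + k)), M⟩ := by
  simp [archStep, h]

lemma cstep_other {ρ : Prog} {n p R M C} {i : Instr} (h : ρ p = i)
    (hl : ∀ rd ra k, i ≠ .load rd ra k) (hs : ∀ ra k rv, i ≠ .store ra k rv) :
    cstep ρ n ⟨⟨p, R, M⟩, C⟩ = ⟨archStep ρ ⟨p, R, M⟩, C⟩ := by
  unfold cstep
  rcases i <;> simp_all

lemma cstep_load_miss {ρ : Prog} {n p R M C rd ra k} (h : ρ p = .load rd ra k)
    (hm : R ra + k ∉ C) :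
    cstep ρ n ⟨⟨p, R, M⟩, C⟩ = ⟨⟨p, R, M⟩, lru n C (R ra + k)⟩ := by
  simp [cstep, h, hm]

lemma cstep_load_hit {ρ : Prog} {n p R M C rd ra k} (h : ρ p = .load rd ra k)
    (hm : R ra + k ∈ C) :
    cstep ρ n ⟨⟨p, R, M⟩, C⟩ =
      ⟨⟨p + 1, Function.update R rd (M (R ra + k)), M⟩, lru n C (R ra + k)⟩ := by
  simp [cstep, h, hm]

/-- zero register file -/
def z : Fin 16 → ℤ := fun _ => 0
/-- zero memory -/
def M0 : ℤ → ℤ := fun _ => 0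

lemma w0 : w 0 = .branch 0 2 := by norm_num [w]
lemma w1 : w 1 = .load 1 1 7 := by norm_num [w]
lemma w2 : w 2 = .const 0 0 := by norm_num [w]
lemma w3 : w 3 = .const 1 0 := by norm_num [w]

lemma e1 : Function.update (Function.update z 0 1) 0 0 = z := by
  funext i; simp only [Function.update_apply, z]; split_ifs <;> simp_all
lemma e2 : Function.update z 1 0 = z := by
  funext i; simp only [Function.update_apply, z]; split_ifs <;> rfl
lemma e3 : Function.update z 0 0 = z := by
  funext i; simp only [Function.update_apply, z]; split_ifs <;> rfl

lemma init_false : init false = ⟨0, Function.update z 0 1, M0⟩ := rfl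
lemma init_true : init true = ⟨0, z, M0⟩ := by
  rw [show init true = ⟨0, Function.update z 0 0, M0⟩ from rfl, e3]

lemma lru_nil {n : ℕ} (hn : 1 ≤ n) (a : ℤ) : lru n [] a = [a] := by
  simp [lru, List.take_of_length_le, hn]
lemma lru_self {n : ℕ} (hn : 1 ≤ n) (a : ℤ) : lru n [a] a = [a] := by
  simp [lru, List.take_of_length_le, hn]

variable {n : ℕ}

-- b = false trajectory
lemma F0 : cstep w n ⟨⟨0, Function.update z 0 1, M0⟩, []⟩
    = ⟨⟨2, Function.update z 0 1, M0⟩, []⟩ := by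
  rw [cstep_other w0 (by intro _ _ _ h; cases h) (by intro _ _ _ h; cases h),
    archStep_branchT w0 (by rw [Function.update_self]; norm_num)]
  norm_num

lemma F1 : cstep w n ⟨⟨2, Function.update z 0 1, M0⟩, []⟩ = ⟨⟨3, z, M0⟩, []⟩ := by
  rw [cstep_other w2 (by intro _ _ _ h; cases h) (by intro _ _ _ h; cases h),
    archStep_const w2]
  norm_num [e1]
  try rfl

lemma F2 : cstep w n ⟨⟨3, z, M0⟩, []⟩ = ⟨⟨4, z, M0⟩, []⟩ := by
  rw [cstep_other w3 (by intro _ _ _ h; cases h) (by intro _ _ _ h; cases h),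
    archStep_const w3]
  norm_num [e2]
  try rfl

-- b = true trajectory
lemma T0 : cstep w n ⟨⟨0, z, M0⟩, []⟩ = ⟨⟨1, z, M0⟩, []⟩ := by
  rw [cstep_other w0 (by intro _ _ _ h; cases h) (by intro _ _ _ h; cases h),
    archStep_branchN w0 rfl]
  norm_num

lemma T1 (hn : 1 ≤ n) : cstep w n ⟨⟨1, z, M0⟩, []⟩ = ⟨⟨1, z, M0⟩, [7]⟩ := by
  rw [cstep_load_miss w1 (by simp)]
  norm_num [z, lru_nil hn]
  try rfl

lemma T2 (hn : 1 ≤ n) : cstep w n ⟨⟨1, z, M0⟩, [7]⟩ = ⟨⟨2, z, M0⟩, [7]⟩ := by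
  rw [cstep_load_hit w1 (by norm_num [z])]
  norm_num [z, M0, e2, lru_self hn]
  try rfl

lemma T3 : cstep w n ⟨⟨2, z, M0⟩, [7]⟩ = ⟨⟨3, z, M0⟩, [7]⟩ := by
  rw [cstep_other w2 (by intro _ _ _ h; cases h) (by intro _ _ _ h; cases h),
    archStep_const w2]
  norm_num [e3]
  try rfl

lemma T4 : cstep w n ⟨⟨3, z, M0⟩, [7]⟩ = ⟨⟨4, z, M0⟩, [7]⟩ := by
  rw [cstep_other w3 (by intro _ _ _ h; cases h) (by intro _ _ _ h; cases h),
    archStep_const w3]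
  norm_num [e2]
  try rfl

lemma phi_eq : phi = ⟨4, z, M0⟩ := rfl

end CWM
/-- **Existence of a write mechanism via the cache.** In the cache-extended
semantics there exist a program `w`, disjoint nonempty sets of initial states `Σ_w(b)`
encoding an input bit `b`, a common final architectural state `φ`, a distinguished address
`a₀` and a read-out function `V` (with `V C = 1` iff `a₀ ∈ C`) such that every initial
state in `Σ_w(b)` architecturally converges to `φ`, yet when the cache-extended execution
from that state (with empty initial cache) first reaches a state whose architectural
component is `φ`, the cache satisfies `V C = b`. -/
theorem cache_write_mechanism (Cmax : ℕ) (hCmax : 1 ≤ Cmax) :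
    ∃ (w : Prog) (Sw : Bool → Set ArchState) (φ : ArchState)
      (V : List ℤ → Bool) (a₀ : ℤ),
      (∀ b : Bool, (Sw b).Nonempty) ∧
      (∀ σ : ArchState, ¬ (σ ∈ Sw false ∧ σ ∈ Sw true)) ∧
      (∀ C : List ℤ, V C = decide (a₀ ∈ C)) ∧
      (∀ (b : Bool), ∀ σ ∈ Sw b, ∃ n : ℕ, (archStep w)^[n] σ = φ) ∧
      (∀ (b : Bool), ∀ σ ∈ Sw b, ∀ (m u : ℕ) (s : CState),
        CTrace w Cmax m u ⟨σ, []⟩ s → s.σ = φ →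
        (∀ (m' u' : ℕ) (s' : CState), m' < m → CTrace w Cmax m' u' ⟨σ, []⟩ s' →
          s'.σ ≠ φ) →
        V s.C = b) := by
  classical
  have it3 : ∀ (f : CState → CState) (x : CState), f^[3] x = f (f (f x)) := fun f x => rfl
  have it5 : ∀ (f : CState → CState) (x : CState), f^[5] x = f (f (f (f (f x)))) :=
    fun f x => rfl
  -- the concrete cache trajectories
  have c0 : (CWM.cstep CWM.w Cmax)^[0] ⟨CWM.init false, []⟩
      = ⟨⟨0, Function.update CWM.z 0 1, CWM.M0⟩, []⟩ := by rw [CWM.init_false]; rfl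
  have c1 : (CWM.cstep CWM.w Cmax)^[1] ⟨CWM.init false, []⟩
      = ⟨⟨2, Function.update CWM.z 0 1, CWM.M0⟩, []⟩ := by
    rw [CWM.init_false, Function.iterate_one]; exact CWM.F0
  have c2 : (CWM.cstep CWM.w Cmax)^[2] ⟨CWM.init false, []⟩ = ⟨⟨3, CWM.z, CWM.M0⟩, []⟩ := by
    rw [show (2:ℕ) = 1 + 1 from rfl, Function.iterate_add_apply, c1,
      Function.iterate_one, CWM.F1]
  have c3 : (CWM.cstep CWM.w Cmax)^[3] ⟨CWM.init false, []⟩ = ⟨CWM.phi, []⟩ := by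
    rw [show (3:ℕ) = 1 + 2 from rfl, Function.iterate_add_apply, c2,
      Function.iterate_one, CWM.F2, CWM.phi_eq]
  have d0 : (CWM.cstep CWM.w Cmax)^[0] ⟨CWM.init true, []⟩ = ⟨⟨0, CWM.z, CWM.M0⟩, []⟩ := by
    rw [CWM.init_true]; rfl
  have d1 : (CWM.cstep CWM.w Cmax)^[1] ⟨CWM.init true, []⟩ = ⟨⟨1, CWM.z, CWM.M0⟩, []⟩ := by
    rw [CWM.init_true, Function.iterate_one]; exact CWM.T0
  have d2 : (CWM.cstep CWM.w Cmax)^[2] ⟨CWM.init true, []⟩ = ⟨⟨1, CWM.z, CWM.M0⟩, [7]⟩ := by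
    rw [show (2:ℕ) = 1 + 1 from rfl, Function.iterate_add_apply, d1,
      Function.iterate_one, CWM.T1 hCmax]
  have d3 : (CWM.cstep CWM.w Cmax)^[3] ⟨CWM.init true, []⟩ = ⟨⟨2, CWM.z, CWM.M0⟩, [7]⟩ := by
    rw [show (3:ℕ) = 1 + 2 from rfl, Function.iterate_add_apply, d2,
      Function.iterate_one, CWM.T2 hCmax]
  have d4 : (CWM.cstep CWM.w Cmax)^[4] ⟨CWM.init true, []⟩ = ⟨⟨3, CWM.z, CWM.M0⟩, [7]⟩ := by
    rw [show (4:ℕ) = 1 + 3 from rfl, Function.iterate_add_apply, d3,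
      Function.iterate_one, CWM.T3]
  have d5 : (CWM.cstep CWM.w Cmax)^[5] ⟨CWM.init true, []⟩ = ⟨CWM.phi, [7]⟩ := by
    rw [show (5:ℕ) = 1 + 4 from rfl, Function.iterate_add_apply, d4,
      Function.iterate_one, CWM.T4, CWM.phi_eq]
  refine ⟨CWM.w, fun b => {CWM.init b}, CWM.phi, fun C => decide ((7:ℤ) ∈ C), 7,
    fun b => ⟨_, rfl⟩, ?_, fun C => rfl, ?_, ?_⟩
  · rintro σ ⟨h0, h1⟩
    have h : CWM.init false = CWM.init true := by
      rw [← Set.mem_singleton_iff.mp h0, ← Set.mem_singleton_iff.mp h1]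
    have h' := congrArg (fun s => s.R 0) h
    simp [CWM.init] at h'
  · rintro b σ hσ
    rw [Set.mem_singleton_iff] at hσ; subst hσ
    cases b with
    | false =>
      refine ⟨3, ?_⟩
      have A0 : archStep CWM.w (CWM.init false) = ⟨2, Function.update CWM.z 0 1, CWM.M0⟩ := by
        rw [CWM.init_false, CWM.archStep_branchT CWM.w0
          (by rw [Function.update_self]; norm_num)]
        norm_num
      have A1 : archStep CWM.w ⟨2, Function.update CWM.z 0 1, CWM.M0⟩
          = ⟨3, CWM.z, CWM.M0⟩ := by
        rw [CWM.archStep_const CWM.w2]; norm_num [CWM.e1]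
        try rfl
      have A2 : archStep CWM.w ⟨3, CWM.z, CWM.M0⟩ = CWM.phi := by
        rw [CWM.archStep_const CWM.w3, CWM.phi_eq]; norm_num [CWM.e2]
        try rfl
      show archStep CWM.w (archStep CWM.w (archStep CWM.w (CWM.init false))) = CWM.phi
      rw [A0, A1, A2]
    | true =>
      refine ⟨4, ?_⟩
      have A0 : archStep CWM.w (CWM.init true) = ⟨1, CWM.z, CWM.M0⟩ := by
        rw [CWM.init_true, CWM.archStep_branchN CWM.w0 rfl]; norm_num
      have A1 : archStep CWM.w ⟨1, CWM.z, CWM.M0⟩ = ⟨2, CWM.z, CWM.M0⟩ := by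
        rw [CWM.archStep_load CWM.w1]; norm_num [CWM.z, CWM.M0, CWM.e2]
        try rfl
      have A2 : archStep CWM.w ⟨2, CWM.z, CWM.M0⟩ = ⟨3, CWM.z, CWM.M0⟩ := by
        rw [CWM.archStep_const CWM.w2]; norm_num [CWM.e3]
        try rfl
      have A3 : archStep CWM.w ⟨3, CWM.z, CWM.M0⟩ = CWM.phi := by
        rw [CWM.archStep_const CWM.w3, CWM.phi_eq]; norm_num [CWM.e2]
        try rfl
      show archStep CWM.w (archStep CWM.w (archStep CWM.w (archStep CWM.w (CWM.init true))))
        = CWM.phi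
      rw [A0, A1, A2, A3]
  · rintro b σ hσ m u s htr hphi hmin
    rw [Set.mem_singleton_iff] at hσ; subst hσ
    have hs := CWM.trace_cstep htr
    cases b with
    | false =>
      have hm : m = 3 := by
        rcases lt_trichotomy m 3 with h | h | h
        · exfalso
          interval_cases m
          · rw [hs, c0] at hphi
            have := congrArg ArchState.pc hphi
            rw [CWM.phi_eq] at this
            norm_num at this
          · rw [hs, c1] at hphi
            have := congrArg ArchState.pc hphi
            rw [CWM.phi_eq] at this
            norm_num at this
          · rw [hs, c2] at hphi
            have := congrArg ArchState.pc hphi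
            rw [CWM.phi_eq] at this
            norm_num at this
        · exact h
        · exfalso
          obtain ⟨u', t'⟩ := CWM.trace_exists CWM.w Cmax 3 ⟨CWM.init false, []⟩
          rw [c3] at t'
          exact hmin 3 u' _ h t' rfl
      subst hm
      rw [hs, c3]
      simp
    | true =>
      have hm : m = 5 := by
        rcases lt_trichotomy m 5 with h | h | h
        · exfalso
          interval_cases m
          · rw [hs, d0] at hphi
            have := congrArg ArchState.pc hphi
            rw [CWM.phi_eq] at this
            norm_num at this
          · rw [hs, d1] at hphi
            have := congrArg ArchState.pc hphi
            rw [CWM.phi_eq] at this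
            norm_num at this
          · rw [hs, d2] at hphi
            have := congrArg ArchState.pc hphi
            rw [CWM.phi_eq] at this
            norm_num at this
          · rw [hs, d3] at hphi
            have := congrArg ArchState.pc hphi
            rw [CWM.phi_eq] at this
            norm_num at this
          · rw [hs, d4] at hphi
            have := congrArg ArchState.pc hphi
            rw [CWM.phi_eq] at this
            norm_num at this
        · exact h
        · exfalso
          obtain ⟨u', t'⟩ := CWM.trace_exists CWM.w Cmax 5 ⟨CWM.init true, []⟩
          rw [d5] at t'
          exact hmin 5 u' _ h t' rfl
      subst hm
      rw [hs, d5]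
      simp
end
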